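/- Let S be a positive definite even lattice with a vector ℏ of square 6 such that the orthogonal complement ℏ^⊥ ⊂ S contains no roots (vectors of square 2) and ℏ ∈ 3S^∨. Let 𝔏 = {l ∈ S : l² = 4, l·ℏ = 3} and suppose 𝔏 is invariant under l ↦ l* := ℏ − l. Then for any l₁, l₂ ∈ 𝔏, the product l₁·l₂ takes only the values 4 (iff l₁ = l₂), −1 (iff l₂ = l₁*), 1, or 2. -/
import Mathlib


/-- Possible products of lines in an admissible positive definite lattice. -/
theorem line_products_positive_definite {M : Type*} [AddCommGroup M]
    (b : LinearMap.BilinForm ℤ M) (hsymm : ∀ x y, b x y = b y x)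
    (hpos : ∀ x : M, x ≠ 0 → 0 < b x x) (heven : ∀ x : M, 2 ∣ b x x)
    (ℏ : M) (hℏ : b ℏ ℏ = 6) (hdiv : ∀ x : M, (3 : ℤ) ∣ b x ℏ)
    (hnoroot : ∀ x : M, b x ℏ = 0 → b x x ≠ 2)
    (𝔏 : Set M) (h𝔏 : 𝔏 = {l : M | b l l = 4 ∧ b l ℏ = 3})
    (hstar : ∀ l ∈ 𝔏, ℏ - l ∈ 𝔏) :
    ∀ l₁ ∈ 𝔏, ∀ l₂ ∈ 𝔏,
      (b l₁ l₂ = 4 ↔ l₁ = l₂) ∧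
      (b l₁ l₂ = -1 ↔ l₂ = ℏ - l₁) ∧
      (b l₁ l₂ = 4 ∨ b l₁ l₂ = -1 ∨ b l₁ l₂ = 1 ∨ b l₁ l₂ = 2) := by
  intro l₁ hl₁ l₂ hl₂
  rw [h𝔏] at hl₁ hl₂
  obtain ⟨h11, h1ℏ⟩ := hl₁
  obtain ⟨h22, h2ℏ⟩ := hl₂
  have hzero : ∀ x : M, b x x = 0 → x = 0 := by
    intro x hx
    by_contra h
    exact absurd hx (hpos x h).ne'
  have hnonneg : ∀ x : M, 0 ≤ b x x := by
    intro x
    by_cases h : x = 0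
    · simp [h]
    · exact le_of_lt (hpos x h)
  set t := b l₁ l₂ with ht
  have h21 : b l₂ l₁ = t := hsymm l₂ l₁
  have hℏ1 : b ℏ l₁ = 3 := by rw [hsymm]; exact h1ℏ
  have hℏ2 : b ℏ l₂ = 3 := by rw [hsymm]; exact h2ℏ
  -- square of l₁ - l₂
  have hd : b (l₁ - l₂) (l₁ - l₂) = 8 - 2 * t := by
    simp only [map_sub, LinearMap.sub_apply]
    rw [h11, h22, h21, ← ht]; ring
  -- square of l₁ + l₂ - ℏ
  have hs : b (l₁ + l₂ - ℏ) (l₁ + l₂ - ℏ) = 2 * t + 2 := by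
    simp only [map_sub, map_add, LinearMap.sub_apply, LinearMap.add_apply]
    rw [h11, h22, h21, hℏ, h1ℏ, h2ℏ, hℏ1, hℏ2, ← ht]; ring
  have hdℏ : b (l₁ - l₂) ℏ = 0 := by
    simp only [map_sub, LinearMap.sub_apply]
    rw [h1ℏ, h2ℏ]; ring
  have hsℏ : b (l₁ + l₂ - ℏ) ℏ = 0 := by
    simp only [map_sub, map_add, LinearMap.sub_apply, LinearMap.add_apply]
    rw [h1ℏ, h2ℏ, hℏ]; ring
  have ht4 : t ≤ 4 := by have := hnonneg (l₁ - l₂); omega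
  have htm1 : -1 ≤ t := by have := hnonneg (l₁ + l₂ - ℏ); omega
  have ht0 : t ≠ 0 := by
    intro h0
    exact hnoroot _ hsℏ (by omega)
  have ht3 : t ≠ 3 := by
    intro h3
    exact hnoroot _ hdℏ (by omega)
  refine ⟨⟨?_, ?_⟩, ⟨?_, ?_⟩, by omega⟩
  · intro h4
    have : b (l₁ - l₂) (l₁ - l₂) = 0 := by omega
    have := hzero _ this
    have := sub_eq_zero.mp this
    exact this
  · intro h; rw [ht, h, h22]
  · intro hm1
    have : b (l₁ + l₂ - ℏ) (l₁ + l₂ - ℏ) = 0 := by omega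
    have := hzero _ this
    have h' : l₁ + l₂ = ℏ := sub_eq_zero.mp this
    exact eq_sub_of_add_eq' h'
  · intro h
    rw [ht, h]
    simp only [map_sub]
    rw [h1ℏ, h11]
    norm_num
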